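/- arXiv:2012.03658 — 2 statements merged into one kernel-verified Lean document; each statement's English description precedes it below -/
import Mathlib

section
/- Assume there exist q ∈ ℕ, rates 0 = γ¹ < … < γ^q, square-integrable random variables Z, c_2,…,c_{q−1}, and a constant c > 0, such that for all sufficiently large ℓ, E[(Z_ℓ − Z − Σ_{j=2}^{q−1} c_j 2^{−ℓγ^j})²] ≤ c·2^{−2ℓγ^q}. Then the Richardson extrapolated means satisfy |Σ_{ℓ=1}^k v^{k,q}_ℓ E[Z_ℓ] − E[Z]| ≤ c'·2^{−kγ^q} for all k, for a constant c' independent of k. -/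
/-- The down-shift operator on `ℝ^L`: `(D v)_{ℓ+1} = v_ℓ` and `(D v)_1 = 0`. -/
def reShift {L : ℕ} (v : Fin L → ℝ) : Fin L → ℝ :=
  fun ℓ => if (ℓ : ℕ) = 0 then 0
    else v ⟨(ℓ : ℕ) - 1, Nat.lt_of_le_of_lt (Nat.sub_le _ 1) ℓ.2⟩

/-- The Richardson extrapolation coefficient vectors `v^{k,q} ∈ ℝ^L`:
`v^{0,q} = 0`, `v^{1,q} = e_1`,
`v^{k,q} = (2^{γ^k} D v^{k−1,q} − v^{k−1,q})/(2^{γ^k} − 1)` for `1 < k < q`, and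
`v^{k,q} = D v^{k−1,q}` for `k ≥ q`, where `D` is the down-shift matrix. -/
noncomputable def reVec (L q : ℕ) (γ : ℕ → ℝ) : ℕ → Fin L → ℝ
  | 0 => 0
  | 1 => fun ℓ => if (ℓ : ℕ) = 0 then 1 else 0
  | (k + 2) =>
      if k + 2 < q then
        ((2 : ℝ) ^ (γ (k + 2)) - 1)⁻¹ •
          ((2 : ℝ) ^ (γ (k + 2)) • reShift (reVec L q γ (k + 1)) - reVec L q γ (k + 1))
      else reShift (reVec L q γ (k + 1))

open Finset MeasureTheory ProbabilityTheory

/-- Scalar (length-independent) version of the Richardson coefficients. -/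
noncomputable def wRe (q : ℕ) (γ : ℕ → ℝ) : ℕ → ℕ → ℝ
  | 0 => fun _ => 0
  | 1 => fun ℓ => if ℓ = 0 then 1 else 0
  | (k + 2) => fun ℓ =>
      if k + 2 < q then
        ((2 : ℝ) ^ (γ (k + 2)) - 1)⁻¹ *
          ((2 : ℝ) ^ (γ (k + 2)) * (if ℓ = 0 then 0 else wRe q γ (k + 1) (ℓ - 1))
            - wRe q γ (k + 1) ℓ)
      else (if ℓ = 0 then 0 else wRe q γ (k + 1) (ℓ - 1))

lemma reVec_eq_wRe (L q : ℕ) (γ : ℕ → ℝ) : ∀ j (ℓ : Fin L),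
    reVec L q γ j ℓ = wRe q γ j (ℓ : ℕ) := by
  intro j
  induction j using Nat.strong_induction_on with
  | _ j ih =>
    match j with
    | 0 => intro ℓ; simp [reVec, wRe]
    | 1 => intro ℓ; simp [reVec, wRe]
    | (k + 2) =>
      intro ℓ
      have h1 := ih (k + 1) (by omega)
      by_cases hk : k + 2 < q
      · simp only [reVec, wRe, hk, if_pos, reShift, Pi.smul_apply, Pi.sub_apply, smul_eq_mul]
        by_cases h0 : (ℓ : ℕ) = 0 <;> simp [h0, h1]
      · simp only [reVec, wRe, hk, if_neg, reShift, not_false_iff]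
        by_cases h0 : (ℓ : ℕ) = 0 <;> simp [h0, h1]

lemma wRe_eq_zero_of_ge (q : ℕ) (γ : ℕ → ℝ) : ∀ j ℓ, j ≤ ℓ → wRe q γ j ℓ = 0 := by
  intro j
  induction j using Nat.strong_induction_on with
  | _ j ih =>
    match j with
    | 0 => intro ℓ _; simp [wRe]
    | 1 => intro ℓ h; simp [wRe]; omega
    | (k + 2) =>
      intro ℓ h
      have h1 : wRe q γ (k + 1) ℓ = 0 := ih (k + 1) (by omega) ℓ (by omega)
      have h2 : wRe q γ (k + 1) (ℓ - 1) = 0 := ih (k + 1) (by omega) (ℓ - 1) (by omega)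
      by_cases hk : k + 2 < q <;> simp [wRe, hk, h1, h2]

lemma wRe_eq_zero_of_le (q : ℕ) (γ : ℕ → ℝ) : ∀ j ℓ, ℓ + max q 2 ≤ j → wRe q γ j ℓ = 0 := by
  intro j
  induction j using Nat.strong_induction_on with
  | _ j ih =>
    match j with
    | 0 => intro ℓ _; simp [wRe]
    | 1 => intro ℓ h; omega
    | (k + 2) =>
      intro ℓ h
      have hk : ¬ (k + 2 < q) := by omega
      simp only [wRe, hk, if_neg, not_false_iff]
      rcases Nat.eq_zero_or_pos ℓ with h0 | h0
      · simp [h0]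
      · have : ℓ ≠ 0 := by omega
        simp only [this, if_neg, not_false_iff]
        exact ih (k + 1) (by omega) (ℓ - 1) (by omega)

lemma wRe_bound (q : ℕ) (γ : ℕ → ℝ) :
    ∀ k, max q 2 - 1 ≤ k → ∀ ℓ,
      |wRe q γ k ℓ| ≤ 1 + ∑ ℓ' ∈ Finset.range (max q 2), |wRe q γ (max q 2 - 1) ℓ'| := by
  set m := max q 2 - 1 with hm
  set B := 1 + ∑ ℓ' ∈ Finset.range (max q 2), |wRe q γ m ℓ'| with hB
  have hB0 : (0:ℝ) ≤ B := by
    rw [hB]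
    have : (0:ℝ) ≤ ∑ ℓ' ∈ Finset.range (max q 2), |wRe q γ m ℓ'| :=
      Finset.sum_nonneg fun _ _ => abs_nonneg _
    linarith
  have hbase : ∀ ℓ, |wRe q γ m ℓ| ≤ B := by
    intro ℓ
    rcases Nat.lt_or_ge ℓ (max q 2) with h | h
    · calc |wRe q γ m ℓ| ≤ ∑ ℓ' ∈ Finset.range (max q 2), |wRe q γ m ℓ'| :=
            Finset.single_le_sum (f := fun ℓ2 => |wRe q γ m ℓ2|) (fun _ _ => abs_nonneg _)
              (Finset.mem_range.mpr h)
        _ ≤ B := by rw [hB]; linarith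
    · rw [wRe_eq_zero_of_ge q γ m ℓ (by omega)]
      simpa using hB0
  intro k
  induction k using Nat.strong_induction_on with
  | _ k ih =>
    intro hk ℓ
    rcases Nat.lt_or_ge m k with h | h
    · obtain ⟨a, rfl⟩ : ∃ a, k = a + 2 := ⟨k - 2, by omega⟩
      have hq : ¬ (a + 2 < q) := by omega
      simp only [wRe, if_neg hq]
      rcases Nat.eq_zero_or_pos ℓ with h0 | h0
      · simpa [h0] using hB0
      · have hne : ℓ ≠ 0 := by omega
        simp only [hne, if_neg, not_false_iff]
        exact ih (a + 1) (by omega) (by omega) (ℓ - 1)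
    · have : k = m := by omega
      rw [this]; exact hbase ℓ

/-- The generating sum `∑_ℓ w^k_ℓ 2^{-(ℓ+1)x}`. -/
noncomputable def wS (q : ℕ) (γ : ℕ → ℝ) (k : ℕ) (x : ℝ) : ℝ :=
  ∑ ℓ ∈ Finset.range k, wRe q γ k ℓ * (2 : ℝ) ^ (-((ℓ : ℝ) + 1) * x)

lemma wS_one (q : ℕ) (γ : ℕ → ℝ) (x : ℝ) : wS q γ 1 x = (2 : ℝ) ^ (-x) := by
  simp [wS, wRe]

lemma wS_rec (q : ℕ) (γ : ℕ → ℝ) (k : ℕ) (x : ℝ) :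
    wS q γ (k + 2) x =
      if k + 2 < q then
        ((2 : ℝ) ^ (γ (k + 2)) - 1)⁻¹ *
          ((2 : ℝ) ^ (γ (k + 2)) * ((2 : ℝ) ^ (-x) * wS q γ (k + 1) x)
            - wS q γ (k + 1) x)
      else (2 : ℝ) ^ (-x) * wS q γ (k + 1) x := by
  have hshift : ∑ ℓ ∈ Finset.range (k + 2),
      (if ℓ = 0 then (0:ℝ) else wRe q γ (k + 1) (ℓ - 1)) * (2 : ℝ) ^ (-((ℓ : ℝ) + 1) * x)
      = (2 : ℝ) ^ (-x) * wS q γ (k + 1) x := by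
    rw [Finset.sum_range_succ' (fun ℓ => (if ℓ = 0 then (0:ℝ) else wRe q γ (k + 1) (ℓ - 1)) *
      (2 : ℝ) ^ (-((ℓ : ℝ) + 1) * x))]
    simp only [Nat.add_sub_cancel, Nat.succ_ne_zero, if_neg, if_pos, zero_mul, add_zero,
      Nat.add_eq, reduceIte]
    rw [wS, Finset.mul_sum]
    apply Finset.sum_congr rfl
    intro ℓ _
    have : (2 : ℝ) ^ (-((ℓ : ℝ) + 1 + 1) * x) = (2 : ℝ) ^ (-x) * (2 : ℝ) ^ (-((ℓ : ℝ) + 1) * x) := by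
      rw [← Real.rpow_add (by norm_num)]
      ring_nf
    push_cast
    rw [this]
    ring
  have hW : ∑ ℓ ∈ Finset.range (k + 2), wRe q γ (k + 1) ℓ * (2:ℝ)^(-((ℓ:ℝ)+1)*x)
      = wS q γ (k + 1) x := by
    rw [Finset.sum_range_succ, wRe_eq_zero_of_ge q γ (k + 1) (k + 1) le_rfl]
    simp [wS]
  by_cases hk : k + 2 < q
  · simp only [hk, if_pos]
    conv_lhs => rw [wS]
    simp only [wRe, hk, if_pos]
    rw [← hshift, ← hW]
    rw [Finset.mul_sum, ← Finset.sum_sub_distrib, Finset.mul_sum]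
    exact Finset.sum_congr rfl fun ℓ _ => by ring
  · simp only [hk, if_neg, not_false_iff]
    conv_lhs => rw [wS]
    simp only [wRe, if_neg hk]
    exact hshift

lemma wS_succ_zero (q : ℕ) (γ : ℕ → ℝ) (k : ℕ) (x : ℝ) (h : wS q γ (k + 1) x = 0) :
    wS q γ (k + 2) x = 0 := by
  rw [wS_rec, h]; by_cases hk : k + 2 < q <;> simp [hk]

lemma gamma_pos (q : ℕ) (γ : ℕ → ℝ) (hγ1 : γ 1 = 0)
    (hmono : ∀ j, 1 ≤ j → j < q → γ j < γ (j + 1)) :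
    ∀ j, 2 ≤ j → j ≤ q → 0 < γ j := by
  intro j
  induction j with
  | zero => omega
  | succ n ih =>
    intro h2 hq
    rcases Nat.lt_or_ge n 2 with h | h
    · have hn : n = 1 := by omega
      subst hn
      have := hmono 1 le_rfl (by omega)
      rw [hγ1] at this; exact this
    · have := hmono n (by omega) (by omega)
      exact lt_trans (ih h (by omega)) this

lemma wS_at_zero (q : ℕ) (γ : ℕ → ℝ) (hγ1 : γ 1 = 0)
    (hmono : ∀ j, 1 ≤ j → j < q → γ j < γ (j + 1)) :
    ∀ k, 1 ≤ k → wS q γ k 0 = 1 := by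
  intro k
  induction k using Nat.strong_induction_on with
  | _ k ih =>
    match k with
    | 0 => intro h; omega
    | 1 => intro _; simp [wS_one]
    | (k + 2) =>
      intro _
      have h1 : wS q γ (k + 1) 0 = 1 := ih (k + 1) (by omega) (by omega)
      rw [wS_rec, h1]
      by_cases hk : k + 2 < q
      · have hg : 0 < γ (k + 2) := gamma_pos q γ hγ1 hmono (k + 2) (by omega) (by omega)
        have hα : (1:ℝ) < (2 : ℝ) ^ (γ (k + 2)) := by
          refine (Real.one_lt_rpow_iff_of_pos (by norm_num)).mpr (Or.inl ⟨by norm_num, hg⟩)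
        have : (2 : ℝ) ^ (γ (k + 2)) - 1 ≠ 0 := by linarith
        simp only [hk, if_pos, neg_zero, Real.rpow_zero, mul_one]
        field_simp
      · simp [hk]

lemma wS_at_gamma (q : ℕ) (γ : ℕ → ℝ) :
    ∀ j, 2 ≤ j → j < q → ∀ k, j ≤ k → wS q γ k (γ j) = 0 := by
  intro j h2 hjq k
  induction k using Nat.strong_induction_on with
  | _ k ih =>
    intro hjk
    rcases Nat.lt_or_ge j k with h | h
    · obtain ⟨a, rfl⟩ : ∃ a, k = a + 2 := ⟨k - 2, by omega⟩
      exact wS_succ_zero q γ a (γ j) (ih (a + 1) (by omega) (by omega))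
    · have hkj : k = j := by omega
      subst hkj
      obtain ⟨a, rfl⟩ : ∃ a, k = a + 2 := ⟨k - 2, by omega⟩
      rw [wS_rec]
      simp only [hjq, if_pos]
      have : (2 : ℝ) ^ (γ (a + 2)) * ((2:ℝ) ^ (-γ (a + 2)) * wS q γ (a + 1) (γ (a + 2)))
          = wS q γ (a + 1) (γ (a + 2)) := by
        rw [← mul_assoc, ← Real.rpow_add (by norm_num)]
        simp
      rw [this]
      simp

lemma rem_bound {Ω : Type*} [MeasurableSpace Ω] (P : Measure Ω) [IsProbabilityMeasure P]
    (q : ℕ) (γ : ℕ → ℝ)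
    (Z : Ω → ℝ) (Zs : ℕ → Ω → ℝ) (cf : ℕ → Ω → ℝ)
    (hZ : MemLp Z 2 P) (hZs : ∀ ℓ, MemLp (Zs ℓ) 2 P)
    (hcf : ∀ j, MemLp (cf j) 2 P)
    (c : ℝ) (hc : 0 < c) (ℓ₀ : ℕ)
    (hexp : ∀ ℓ : ℕ, ℓ₀ ≤ ℓ →
      ∫ ω, (Zs ℓ ω - Z ω -
          ∑ j ∈ Finset.Icc 2 (q - 1), cf j ω * (2 : ℝ) ^ (-(ℓ : ℝ) * γ j)) ^ 2 ∂P
        ≤ c * (2 : ℝ) ^ (-2 * (ℓ : ℝ) * γ q)) :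
    ∀ n : ℕ, ℓ₀ ≤ n →
      |(∫ ω, Zs n ω ∂P) - (∫ ω, Z ω ∂P) -
          ∑ j ∈ Finset.Icc 2 (q - 1), (∫ ω, cf j ω ∂P) * (2 : ℝ) ^ (-(n : ℝ) * γ j)|
        ≤ Real.sqrt c * (2 : ℝ) ^ (-(n : ℝ) * γ q) := by
  intro n hn
  have he := hexp n hn
  set f : Ω → ℝ := fun ω => Zs n ω - Z ω -
      ∑ j ∈ Finset.Icc 2 (q - 1), cf j ω * (2 : ℝ) ^ (-(n : ℝ) * γ j) with hf
  have hmemj : ∀ j ∈ Finset.Icc 2 (q - 1),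
      MemLp (fun ω => cf j ω * (2 : ℝ) ^ (-(n : ℝ) * γ j)) 2 P := by
    intro j _
    simpa [mul_comm] using (hcf j).const_mul ((2 : ℝ) ^ (-(n : ℝ) * γ j))
  have hmemsum : MemLp (fun ω => ∑ j ∈ Finset.Icc 2 (q - 1),
      cf j ω * (2 : ℝ) ^ (-(n : ℝ) * γ j)) 2 P := memLp_finset_sum _ hmemj
  have hmemf : MemLp f 2 P := ((hZs n).sub hZ).sub hmemsum
  have hint : ∫ ω, f ω ∂P = (∫ ω, Zs n ω ∂P) - (∫ ω, Z ω ∂P) -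
      ∑ j ∈ Finset.Icc 2 (q - 1), (∫ ω, cf j ω ∂P) * (2 : ℝ) ^ (-(n : ℝ) * γ j) := by
    rw [hf]
    rw [integral_sub (((hZs n).sub hZ).integrable one_le_two |>.congr ?_)
        (hmemsum.integrable one_le_two)]
    · rw [integral_sub ((hZs n).integrable one_le_two) (hZ.integrable one_le_two)]
      rw [integral_finset_sum _ (fun j hj => (hmemj j hj).integrable one_le_two)]
      congr 1
      exact Finset.sum_congr rfl fun j _ => integral_mul_const _ _
    · exact Filter.EventuallyEq.refl _ _
  have hsq : (∫ ω, f ω ∂P) ^ 2 ≤ c * (2 : ℝ) ^ (-2 * (n : ℝ) * γ q) := by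
    have hv := variance_nonneg f P
    rw [variance_eq_sub hmemf] at hv
    have heq : (∫ ω, (f ^ 2) ω ∂P) = ∫ ω, f ω ^ 2 ∂P := by simp [Pi.pow_apply]
    rw [heq] at hv
    have h2 : ∫ ω, f ω ^ 2 ∂P ≤ c * (2 : ℝ) ^ (-2 * (n : ℝ) * γ q) := he
    nlinarith [hv, h2]
  have hrpow : (2 : ℝ) ^ (-2 * (n : ℝ) * γ q) = ((2 : ℝ) ^ (-(n : ℝ) * γ q)) ^ 2 := by
    rw [← Real.rpow_natCast ((2 : ℝ) ^ (-(n : ℝ) * γ q)) 2, ← Real.rpow_mul (by norm_num)]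
    norm_num
    ring_nf
  rw [← hint]
  calc |∫ ω, f ω ∂P| = Real.sqrt ((∫ ω, f ω ∂P) ^ 2) := (Real.sqrt_sq_eq_abs _).symm
    _ ≤ Real.sqrt (c * (2 : ℝ) ^ (-2 * (n : ℝ) * γ q)) := Real.sqrt_le_sqrt hsq
    _ = Real.sqrt c * (2 : ℝ) ^ (-(n : ℝ) * γ q) := by
        rw [hrpow, Real.sqrt_mul hc.le, Real.sqrt_sq (Real.rpow_nonneg (by norm_num) _)]

/-- Bias estimate (RE, M1) of Lemma 3.5: under the pathwise asymptotic expansion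
`Z_ℓ = Z + ∑_{j=2}^{q−1} c_j 2^{−ℓγ^j} + O_{L²}(2^{−ℓγ^q})`, the Richardson
extrapolated means satisfy `|∑_{ℓ=1}^k v^{k,q}_ℓ E[Z_ℓ] − E[Z]| ≤ c'·2^{−kγ^q}`. -/
theorem stmt_7 {Ω : Type*} [MeasurableSpace Ω] (P : Measure Ω) [IsProbabilityMeasure P]
    (q : ℕ) (hq : 1 ≤ q) (γ : ℕ → ℝ) (hγ1 : γ 1 = 0)
    (hmono : ∀ j, 1 ≤ j → j < q → γ j < γ (j + 1))
    (Z : Ω → ℝ) (Zs : ℕ → Ω → ℝ) (cf : ℕ → Ω → ℝ)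
    (hZ : MemLp Z 2 P) (hZs : ∀ ℓ, MemLp (Zs ℓ) 2 P)
    (hcf : ∀ j, MemLp (cf j) 2 P)
    (c : ℝ) (hc : 0 < c) (ℓ₀ : ℕ)
    (hexp : ∀ ℓ : ℕ, ℓ₀ ≤ ℓ →
      ∫ ω, (Zs ℓ ω - Z ω -
          ∑ j ∈ Finset.Icc 2 (q - 1), cf j ω * (2 : ℝ) ^ (-(ℓ : ℝ) * γ j)) ^ 2 ∂P
        ≤ c * (2 : ℝ) ^ (-2 * (ℓ : ℝ) * γ q)) :
    ∃ c' > 0, ∀ k : ℕ, 1 ≤ k →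
      |(∑ ℓ : Fin k, reVec k q γ k ℓ * ∫ ω, Zs ((ℓ : ℕ) + 1) ω ∂P) - ∫ ω, Z ω ∂P|
        ≤ c' * (2 : ℝ) ^ (-(k : ℝ) * γ q) := by
  classical
  set a : ℕ → ℝ := fun n => ∫ ω, Zs n ω ∂P with ha
  set m : ℝ := ∫ ω, Z ω ∂P with hmm
  set mc : ℕ → ℝ := fun j => ∫ ω, cf j ω ∂P with hmc
  set r : ℕ → ℝ := fun n => a n - m -
      ∑ j ∈ Finset.Icc 2 (q - 1), mc j * (2 : ℝ) ^ (-(n : ℝ) * γ j) with hr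
  have hrem : ∀ n : ℕ, ℓ₀ ≤ n → |r n| ≤ Real.sqrt c * (2 : ℝ) ^ (-(n : ℝ) * γ q) :=
    rem_bound P q γ Z Zs cf hZ hZs hcf c hc ℓ₀ hexp
  set M : ℕ := max q 2 with hM
  set B : ℝ := 1 + ∑ ℓ' ∈ Finset.range M, |wRe q γ (M - 1) ℓ'| with hB
  have hB0 : (0:ℝ) < B := by
    rw [hB]
    have : (0:ℝ) ≤ ∑ ℓ' ∈ Finset.range M, |wRe q γ (M - 1) ℓ'| :=
      Finset.sum_nonneg fun _ _ => abs_nonneg _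
    linarith
  have hγq : 0 ≤ γ q := by
    rcases Nat.lt_or_ge q 2 with h | h
    · have : q = 1 := by omega
      rw [this, hγ1]
    · exact (gamma_pos q γ hγ1 hmono q h le_rfl).le
  set C₁ : ℝ := (M : ℝ) * (B * (Real.sqrt c * (2:ℝ) ^ (((M:ℝ) - 1) * γ q))) with hC₁
  have hC₁0 : 0 ≤ C₁ := by
    rw [hC₁]
    have := Real.sqrt_nonneg c
    have := Real.rpow_nonneg (show (0:ℝ) ≤ 2 by norm_num) (((M:ℝ) - 1) * γ q)
    positivity
  set K₀ : ℕ := ℓ₀ + M + q with hK₀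
  set E : ℕ → ℝ := fun k =>
      |(∑ ℓ ∈ Finset.range k, wRe q γ k ℓ * a (ℓ + 1)) - m| with hE
  -- conversion of the Fin sum
  have hconv : ∀ k : ℕ,
      (∑ ℓ : Fin k, reVec k q γ k ℓ * a ((ℓ : ℕ) + 1))
        = ∑ ℓ ∈ Finset.range k, wRe q γ k ℓ * a (ℓ + 1) := by
    intro k
    rw [← Fin.sum_univ_eq_sum_range (fun ℓ => wRe q γ k ℓ * a (ℓ + 1)) k]
    exact Finset.sum_congr rfl fun ℓ _ => by rw [reVec_eq_wRe]
  -- main estimate for large k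
  have hmain : ∀ k, K₀ ≤ k → E k ≤ C₁ * (2:ℝ) ^ (-(k : ℝ) * γ q) := by
    intro k hk
    have hk1 : 1 ≤ k := by omega
    have hkM : M ≤ k := by omega
    -- the coefficients sum to 1
    have hsum1 : (∑ ℓ ∈ Finset.range k, wRe q γ k ℓ) = 1 := by
      have h := wS_at_zero q γ hγ1 hmono k hk1
      rw [wS] at h
      simpa using h
    -- the extrapolation kills the expansion terms
    have hgam : ∀ j ∈ Finset.Icc 2 (q - 1),
        (∑ ℓ ∈ Finset.range k, wRe q γ k ℓ * (2:ℝ) ^ (-((ℓ:ℝ) + 1) * γ j)) = 0 := by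
      intro j hj
      rw [Finset.mem_Icc] at hj
      have h := wS_at_gamma q γ j hj.1 (by omega) k (by omega)
      rw [wS] at h
      exact h
    -- decomposition
    have hdec : (∑ ℓ ∈ Finset.range k, wRe q γ k ℓ * a (ℓ + 1)) - m
        = ∑ ℓ ∈ Finset.range k, wRe q γ k ℓ * r (ℓ + 1) := by
      have hterm : ∀ ℓ ∈ Finset.range k, wRe q γ k ℓ * a (ℓ + 1)
          = wRe q γ k ℓ * r (ℓ + 1) + wRe q γ k ℓ * m
            + ∑ j ∈ Finset.Icc 2 (q - 1),
                mc j * (wRe q γ k ℓ * (2:ℝ) ^ (-((ℓ:ℝ) + 1) * γ j)) := by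
        intro ℓ _
        have h1 : wRe q γ k ℓ * (∑ j ∈ Finset.Icc 2 (q - 1),
            mc j * (2:ℝ) ^ (-((ℓ:ℝ) + 1) * γ j))
            = ∑ j ∈ Finset.Icc 2 (q - 1),
                mc j * (wRe q γ k ℓ * (2:ℝ) ^ (-((ℓ:ℝ) + 1) * γ j)) := by
          rw [Finset.mul_sum]
          exact Finset.sum_congr rfl fun j _ => by ring
        have h2 : r (ℓ + 1) = a (ℓ + 1) - m - ∑ j ∈ Finset.Icc 2 (q - 1),
            mc j * (2:ℝ) ^ (-((ℓ:ℝ) + 1) * γ j) := by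
          simp only [hr]
          congr 1
          refine Finset.sum_congr rfl fun j _ => ?_
          have hcast : (-(((ℓ:ℕ) + 1 : ℕ) : ℝ)) * γ j = -((ℓ:ℝ) + 1) * γ j := by
            push_cast; ring
          rw [hcast]
        rw [h2, ← h1]
        ring
      rw [Finset.sum_congr rfl hterm, Finset.sum_add_distrib, Finset.sum_add_distrib,
        ← Finset.sum_mul, hsum1, one_mul, Finset.sum_comm]
      have h0 : ∀ j ∈ Finset.Icc 2 (q - 1),
          (∑ ℓ ∈ Finset.range k,
            mc j * (wRe q γ k ℓ * (2:ℝ) ^ (-((ℓ:ℝ) + 1) * γ j))) = 0 := by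
        intro j hj
        rw [← Finset.mul_sum, hgam j hj, mul_zero]
      rw [Finset.sum_congr rfl h0]
      simp
    rw [hE]
    simp only []
    rw [hdec]
    -- restrict to the support
    have hIco : Finset.Ico (k - M) k ⊆ Finset.range k := by
      intro x hx
      rw [Finset.mem_Ico] at hx
      exact Finset.mem_range.mpr hx.2
    have hvan : ∀ x ∈ Finset.range k, x ∉ Finset.Ico (k - M) k →
        wRe q γ k x * r (x + 1) = 0 := by
      intro x hx hx'
      rw [Finset.mem_range] at hx
      rw [Finset.mem_Ico] at hx'
      have hxlt : x < k - M := by omega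
      rw [wRe_eq_zero_of_le q γ k x (by omega), zero_mul]
    rw [← Finset.sum_subset hIco hvan]
    -- per-term bound
    have hterm : ∀ ℓ ∈ Finset.Ico (k - M) k,
        |wRe q γ k ℓ * r (ℓ + 1)|
          ≤ B * (Real.sqrt c * ((2:ℝ) ^ (((M:ℝ) - 1) * γ q) * (2:ℝ) ^ (-(k:ℝ) * γ q))) := by
      intro ℓ hℓ
      rw [Finset.mem_Ico] at hℓ
      have hℓ0 : ℓ₀ ≤ ℓ + 1 := by omega
      have hw : |wRe q γ k ℓ| ≤ B := wRe_bound q γ k (by omega) ℓ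
      have hrℓ : |r (ℓ + 1)| ≤ Real.sqrt c * (2:ℝ) ^ (-((ℓ:ℝ) + 1) * γ q) := by
        have := hrem (ℓ + 1) hℓ0
        push_cast at this ⊢
        convert this using 3 <;> push_cast <;> ring_nf
      have hmono2 : (2:ℝ) ^ (-((ℓ:ℝ) + 1) * γ q)
          ≤ (2:ℝ) ^ (((M:ℝ) - 1) * γ q) * (2:ℝ) ^ (-(k:ℝ) * γ q) := by
        rw [← Real.rpow_add (by norm_num)]
        apply Real.rpow_le_rpow_of_exponent_le (by norm_num)
        have hcast : ((k - M : ℕ) : ℝ) = (k:ℝ) - (M:ℝ) := by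
          push_cast [Nat.cast_sub hkM]
          ring
        have hle : (k:ℝ) - (M:ℝ) ≤ (ℓ:ℝ) := by
          rw [← hcast]
          exact_mod_cast hℓ.1
        nlinarith [hγq, hle]
      calc |wRe q γ k ℓ * r (ℓ + 1)| = |wRe q γ k ℓ| * |r (ℓ + 1)| := abs_mul _ _
        _ ≤ B * (Real.sqrt c * (2:ℝ) ^ (-((ℓ:ℝ) + 1) * γ q)) := by
            apply mul_le_mul hw hrℓ (abs_nonneg _) hB0.le
        _ ≤ B * (Real.sqrt c * ((2:ℝ) ^ (((M:ℝ) - 1) * γ q) * (2:ℝ) ^ (-(k:ℝ) * γ q))) := by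
            apply mul_le_mul_of_nonneg_left _ hB0.le
            exact mul_le_mul_of_nonneg_left hmono2 (Real.sqrt_nonneg c)
    calc |∑ ℓ ∈ Finset.Ico (k - M) k, wRe q γ k ℓ * r (ℓ + 1)|
        ≤ ∑ ℓ ∈ Finset.Ico (k - M) k, |wRe q γ k ℓ * r (ℓ + 1)| :=
          Finset.abs_sum_le_sum_abs _ _
      _ ≤ ∑ ℓ ∈ Finset.Ico (k - M) k,
            B * (Real.sqrt c * ((2:ℝ) ^ (((M:ℝ) - 1) * γ q) * (2:ℝ) ^ (-(k:ℝ) * γ q))) :=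
          Finset.sum_le_sum hterm
      _ = (M : ℝ) * (B * (Real.sqrt c *
            ((2:ℝ) ^ (((M:ℝ) - 1) * γ q) * (2:ℝ) ^ (-(k:ℝ) * γ q)))) := by
          rw [Finset.sum_const, Nat.card_Ico]
          rw [show k - (k - M) = M by omega]
          rw [nsmul_eq_mul]
      _ = C₁ * (2:ℝ) ^ (-(k:ℝ) * γ q) := by rw [hC₁]; ring
  -- assemble the constant
  set c' : ℝ := 1 + C₁ + ∑ k ∈ Finset.range K₀, E k * (2:ℝ) ^ ((k:ℝ) * γ q) with hc'
  have hsumnn : (0:ℝ) ≤ ∑ k ∈ Finset.range K₀, E k * (2:ℝ) ^ ((k:ℝ) * γ q) :=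
    Finset.sum_nonneg fun k _ =>
      mul_nonneg (abs_nonneg _) (Real.rpow_nonneg (by norm_num) _)
  have hc'pos : 0 < c' := by rw [hc']; linarith
  refine ⟨c', hc'pos, ?_⟩
  intro k hk1
  have hgoal : |(∑ ℓ : Fin k, reVec k q γ k ℓ * ∫ ω, Zs ((ℓ : ℕ) + 1) ω ∂P) - ∫ ω, Z ω ∂P|
      = E k := by
    rw [hE]
    simp only []
    rw [hconv k]
  rw [hgoal]
  rcases Nat.lt_or_ge k K₀ with h | h
  · have hk' : E k * (2:ℝ) ^ ((k:ℝ) * γ q) ≤ c' := by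
      calc E k * (2:ℝ) ^ ((k:ℝ) * γ q)
          ≤ ∑ k' ∈ Finset.range K₀, E k' * (2:ℝ) ^ ((k':ℝ) * γ q) :=
            Finset.single_le_sum (f := fun k' => E k' * (2:ℝ) ^ ((k':ℝ) * γ q))
              (fun _ _ => mul_nonneg (abs_nonneg _) (Real.rpow_nonneg (by norm_num) _))
              (Finset.mem_range.mpr h)
        _ ≤ c' := by rw [hc']; linarith
    have hid : E k = E k * (2:ℝ) ^ ((k:ℝ) * γ q) * (2:ℝ) ^ (-(k:ℝ) * γ q) := by
      rw [mul_assoc, ← Real.rpow_add (by norm_num)]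
      simp
    rw [hid]
    exact mul_le_mul_of_nonneg_right hk' (Real.rpow_nonneg (by norm_num) _)
  · calc E k ≤ C₁ * (2:ℝ) ^ (-(k:ℝ) * γ q) := hmain k h
      _ ≤ c' * (2:ℝ) ^ (-(k:ℝ) * γ q) := by
          apply mul_le_mul_of_nonneg_right _ (Real.rpow_nonneg (by norm_num) _)
          rw [hc']; linarith
end

section
/- Let s < t ≤ q and let v^{k,s}, v^{k,t} ∈ ℝ^L be the Richardson extrapolation vectors for the respective orders (with the same rates γ^j). Write v^{L,t} = Σ_{k=1}^L a_k (v^{k,s} − v^{k−1,s}) in the basis of differences. Then the coefficients satisfy a_k = a_{k+1} for all k = 1,…,L−t, and consequently the a_k are bounded: |a_k| ≤ c with c independent of k and of L. -/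
open Finset

lemma reVec_comb (L q : ℕ) (γ : ℕ → ℝ) (k : ℕ) (h : k + 2 < q) :
    reVec L q γ (k+2) = ((2 : ℝ) ^ (γ (k + 2)) - 1)⁻¹ •
          ((2 : ℝ) ^ (γ (k + 2)) • reShift (reVec L q γ (k + 1)) - reVec L q γ (k + 1)) := by
  rw [reVec, if_pos h]

lemma reVec_shift (L q : ℕ) (γ : ℕ → ℝ) (k : ℕ) (h : ¬ (k + 2 < q)) :
    reVec L q γ (k+2) = reShift (reVec L q γ (k+1)) := by
  rw [reVec, if_neg h]

lemma reVec_succ_shift (L q : ℕ) (γ : ℕ → ℝ) (m : ℕ) (hm : 1 ≤ m) (h : ¬ (m + 1 < q)) :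
    reVec L q γ (m+1) = reShift (reVec L q γ m) := by
  obtain ⟨k, rfl⟩ : ∃ k, m = k + 1 := ⟨m - 1, by omega⟩
  exact reVec_shift L q γ k (by omega)

lemma reShift_smul {L : ℕ} (c : ℝ) (v : Fin L → ℝ) : reShift (c • v) = c • reShift v := by
  funext ℓ; simp only [reShift, Pi.smul_apply, smul_eq_mul]; split <;> simp

lemma reShift_sub {L : ℕ} (u v : Fin L → ℝ) : reShift (u - v) = reShift u - reShift v := by
  funext ℓ; simp only [reShift, Pi.sub_apply]; split <;> simp

lemma reShift_sum {L : ℕ} {α : Type*} (S : Finset α) (f : α → Fin L → ℝ) :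
    reShift (∑ i ∈ S, f i) = ∑ i ∈ S, reShift (f i) := by
  funext ℓ; simp only [reShift, Finset.sum_apply]; split <;> simp

-- low indices agree
lemma reVec_low (L s t : ℕ) (γ : ℕ → ℝ) (hst : s ≤ t) :
    ∀ k, k < s → reVec L t γ k = reVec L s γ k := by
  intro k
  induction k using Nat.strong_induction_on with
  | _ k ih =>
    match k with
    | 0 => intro _; rfl
    | 1 => intro _; rfl
    | (k+2) =>
      intro h
      rw [reVec_comb L t γ k (by omega), reVec_comb L s γ k (by omega),
        ih (k+1) (by omega) (by omega)]

lemma reVec_one_two (L : ℕ) (γ : ℕ → ℝ) : ∀ k, reVec L 1 γ k = reVec L 2 γ k := by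
  intro k
  induction k using Nat.strong_induction_on with
  | _ k ih =>
    match k with
    | 0 => rfl
    | 1 => rfl
    | (k+2) =>
      rw [reVec_shift L 1 γ k (by omega), reVec_shift L 2 γ k (by omega), ih (k+1) (by omega)]

-- support: entries at index ≥ k vanish
lemma reVec_support (L s : ℕ) (γ : ℕ → ℝ) :
    ∀ k (ℓ : Fin L), k ≤ (ℓ : ℕ) → reVec L s γ k ℓ = 0 := by
  intro k
  induction k using Nat.strong_induction_on with
  | _ k ih =>
    match k with
    | 0 => intro ℓ _; rfl
    | 1 => intro ℓ h; simp [reVec]; omega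
    | (k+2) =>
      intro ℓ h
      have hsh : reShift (reVec L s γ (k+1)) ℓ = 0 := by
        simp only [reShift]
        split
        · rfl
        · exact ih (k+1) (by omega) _ (by simp; omega)
      by_cases hc : k + 2 < s
      · rw [reVec_comb L s γ k hc]
        simp [hsh, ih (k+1) (by omega) ℓ (by omega)]
      · rw [reVec_shift L s γ k hc]; exact hsh

-- top entry nonzero (entry at index k-1 for 1 ≤ k), needs base 2^γ j ∉ {0,1} for combo indices
lemma reVec_top (L s : ℕ) (γ : ℕ → ℝ)
    (hγ : ∀ j, 2 ≤ j → j < s → 1 < (2:ℝ) ^ (γ j)) :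
    ∀ k (ℓ : Fin L), k = (ℓ : ℕ) + 1 → reVec L s γ k ℓ ≠ 0 := by
  intro k
  induction k using Nat.strong_induction_on with
  | _ k ih =>
    match k with
    | 0 => intro ℓ h; omega
    | 1 => intro ℓ h; simp [reVec]; omega
    | (k+2) =>
      intro ℓ h
      have hℓ : (ℓ : ℕ) = k + 1 := by omega
      have hℓ0 : (ℓ : ℕ) ≠ 0 := by omega
      have hsh : reShift (reVec L s γ (k+1)) ℓ ≠ 0 := by
        simp only [reShift, if_neg hℓ0]
        exact ih (k+1) (by omega) _ (by simp; omega)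
      by_cases hc : k + 2 < s
      · rw [reVec_comb L s γ k hc]
        have hA := hγ (k+2) (by omega) hc
        have hzero : reVec L s γ (k+1) ℓ = 0 := reVec_support L s γ _ ℓ (by omega)
        simp only [Pi.smul_apply, Pi.sub_apply, Pi.smul_apply, smul_eq_mul, hzero, sub_zero]
        intro hcon
        rcases mul_eq_zero.1 hcon with h1 | h1
        · exact (inv_ne_zero (by linarith)) h1
        · rcases mul_eq_zero.1 h1 with h2 | h2
          · exact (by positivity : (0:ℝ) < (2:ℝ)^(γ (k+2))).ne' h2
          · exact hsh h2
      · rw [reVec_shift L s γ k hc]; exact hsh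

lemma diff_indep (L s : ℕ) (γ : ℕ → ℝ)
    (hγ : ∀ j, 2 ≤ j → j < s → 1 < (2:ℝ) ^ (γ j)) (b : Fin L → ℝ)
    (hb : ∑ k : Fin L, b k • (reVec L s γ ((k:ℕ)+1) - reVec L s γ (k:ℕ)) = 0) :
    ∀ k, b k = 0 := by
  suffices H : ∀ j (k : Fin L), L ≤ (k:ℕ) + 1 + j → b k = 0 by
    intro k; exact H L k (by omega)
  intro j
  induction j using Nat.strong_induction_on with
  | _ j ih =>
    intro k hk
    have h0 := congrFun hb k
    simp only [Finset.sum_apply, Pi.smul_apply, Pi.sub_apply, smul_eq_mul,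
      Pi.zero_apply] at h0
    rw [Finset.sum_eq_single k] at h0
    · have ht : reVec L s γ ((k:ℕ)+1) k ≠ 0 := reVec_top L s γ hγ _ k rfl
      have hz : reVec L s γ (k:ℕ) k = 0 := reVec_support L s γ _ k le_rfl
      rw [hz, sub_zero] at h0
      rcases mul_eq_zero.1 h0 with h | h
      · exact h
      · exact absurd h ht
    · intro m _ hm
      have hmk : (m:ℕ) ≠ (k:ℕ) := fun h => hm (Fin.ext h)
      rcases Nat.lt_or_ge (m:ℕ) (k:ℕ) with hlt | hge
      · rw [reVec_support L s γ _ k (by omega), reVec_support L s γ _ k (by omega)]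
        ring
      · have hmgt : (k:ℕ) < (m:ℕ) := by omega
        have hj : 1 ≤ j := by have := m.2; omega
        have : b m = 0 := ih (j-1) (by omega) m (by have := m.2; omega)
        rw [this]; ring
    · intro h; exact absurd (Finset.mem_univ k) h

noncomputable def qcoef (γ : ℕ → ℝ) (s : ℕ) : ℕ → ℕ → ℝ
  | 0, 0 => 1
  | 0, _+1 => 0
  | n+1, i => ((2:ℝ)^(γ (s+n)) - 1)⁻¹ *
      ((2:ℝ)^(γ (s+n)) * (if i = 0 then 0 else qcoef γ s n (i-1)) - qcoef γ s n i)

lemma qcoef_eq_zero (γ : ℕ → ℝ) (s : ℕ) : ∀ n i, n < i → qcoef γ s n i = 0 := by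
  intro n
  induction n with
  | zero => intro i hi; match i, hi with | (j+1), _ => rfl
  | succ n ihn =>
    intro i hi
    have h1 : qcoef γ s n i = 0 := ihn i (by omega)
    have h2 : (if i = 0 then (0:ℝ) else qcoef γ s n (i-1)) = 0 := by
      rw [if_neg (by omega), ihn (i-1) (by omega)]
    rw [qcoef, h1, h2]; ring

lemma main_id (L s t : ℕ) (γ : ℕ → ℝ) (hs : 2 ≤ s) (hst : s ≤ t) :
    ∀ n, s + n ≤ t →
    reShift (reVec L t γ (s + n - 1)) =
      ∑ i ∈ Finset.range (n+1), qcoef γ s n i • reVec L s γ (s+i) := by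
  intro n
  induction n with
  | zero =>
    intro _
    have h1 : reVec L t γ (s - 1) = reVec L s γ (s-1) := reVec_low L s t γ hst _ (by omega)
    have h2 : reVec L s γ s = reShift (reVec L s γ (s-1)) := by
      have h := reVec_succ_shift L s γ (s-1) (by omega) (by omega)
      rw [show s - 1 + 1 = s by omega] at h; exact h
    rw [show s + 0 - 1 = s - 1 from rfl, h1, ← h2]
    simp [qcoef]
  | succ n ihn =>
    intro hn
    have hIH := ihn (by omega)
    set A := (2:ℝ)^(γ (s+n)) with hA
    have hcomb : reVec L t γ (s+n) = (A - 1)⁻¹ •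
        (A • reShift (reVec L t γ (s+n-1)) - reVec L t γ (s+n-1)) := by
      have h := reVec_comb L t γ (s+n-2) (by omega)
      rw [show s+n-2+2 = s+n by omega, show s+n-2+1 = s+n-1 by omega] at h
      exact h
    rw [show s + (n+1) - 1 = s + n by omega, hcomb, reShift_smul, reShift_sub, reShift_smul, hIH,
      reShift_sum]
    have hstep : ∀ i, reShift (reVec L s γ (s+i)) = reVec L s γ (s+i+1) := by
      intro i
      exact (reVec_succ_shift L s γ (s+i) (by omega) (by omega)).symm
    -- rewrite shifted basis
    have hsum1 : ∑ i ∈ Finset.range (n+1), reShift (qcoef γ s n i • reVec L s γ (s+i))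
        = ∑ i ∈ Finset.range (n+2),
            (if i = 0 then (0:ℝ) else qcoef γ s n (i-1)) • reVec L s γ (s+i) := by
      rw [Finset.sum_range_succ'
        (fun i => (if i = 0 then (0:ℝ) else qcoef γ s n (i-1)) • reVec L s γ (s+i)) (n+1)]
      simp only [Nat.succ_ne_zero, if_false, Nat.add_sub_cancel, if_true, zero_smul,
        add_zero, reduceIte]
      refine Finset.sum_congr rfl fun i _ => ?_
      rw [reShift_smul, hstep i, show s + i + 1 = s + (i+1) by omega]
    have hsum2 : ∑ i ∈ Finset.range (n+2), qcoef γ s n i • reVec L s γ (s+i)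
        = ∑ i ∈ Finset.range (n+1), qcoef γ s n i • reVec L s γ (s+i) := by
      rw [Finset.sum_range_succ, qcoef_eq_zero γ s n (n+1) (by omega), zero_smul, add_zero]
    rw [hsum1, ← hsum2, Finset.smul_sum, ← Finset.sum_sub_distrib, Finset.smul_sum]
    refine Finset.sum_congr rfl fun i _ => ?_
    rw [qcoef, smul_smul, ← sub_smul, smul_smul, ← hA]

lemma shift_id (L s t : ℕ) (γ : ℕ → ℝ) (hs : 2 ≤ s) (hst : s ≤ t) :
    ∀ j, reVec L t γ (t + j) =
      ∑ i ∈ Finset.range (t-s+1), qcoef γ s (t-s) i • reVec L s γ (s+i+j) := by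
  intro j
  induction j with
  | zero =>
    have h1 : reVec L t γ t = reShift (reVec L t γ (t-1)) := by
      have h := reVec_succ_shift L t γ (t-1) (by omega) (by omega)
      rw [show t - 1 + 1 = t by omega] at h; exact h
    have h2 := main_id L s t γ hs hst (t-s) (by omega)
    rw [show s + (t-s) - 1 = t - 1 by omega] at h2
    rw [show t + 0 = t from rfl, h1, h2]
    refine Finset.sum_congr rfl fun i _ => ?_
    rw [show s + i + 0 = s + i from rfl]
  | succ j ihj =>
    have h1 : reVec L t γ (t + (j+1)) = reShift (reVec L t γ (t+j)) := by
      have h := reVec_succ_shift L t γ (t+j) (by omega) (by omega)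
      rw [show t + j + 1 = t + (j+1) from rfl] at h; exact h
    rw [h1, ihj, reShift_sum]
    refine Finset.sum_congr rfl fun i _ => ?_
    rw [reShift_smul, (reVec_succ_shift L s γ (s+i+j) (by omega) (by omega)).symm,
      show s+i+j+1 = s+i+(j+1) by omega]

lemma master (γ : ℕ → ℝ) (q s t : ℕ) (hs : 2 ≤ s) (hst : s ≤ t) (htq : t ≤ q)
    (hγ1 : γ 1 = 0) (hmono : ∀ j, 1 ≤ j → j < q → γ j < γ (j + 1)) :
    ∃ c : ℝ, ∀ (L : ℕ), t ≤ L → ∀ (a : Fin L → ℝ),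
      (reVec L t γ L
          = ∑ k : Fin L, a k • (reVec L s γ ((k : ℕ) + 1) - reVec L s γ (k : ℕ))) →
      (∀ (k : ℕ), 1 ≤ k → k ≤ L - t →
        ∀ (h1 : k - 1 < L) (h2 : k < L), a ⟨k - 1, h1⟩ = a ⟨k, h2⟩) ∧
      (∀ k, |a k| ≤ c) := by
  have hγpos : ∀ j, 2 ≤ j → j ≤ q → 0 < γ j := by
    intro j h2 hq
    induction j with
    | zero => omega
    | succ j ih =>
      rcases Nat.lt_or_ge j 2 with h | h
      · have hj1 : j = 1 := by omega
        subst hj1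
        have h := hmono 1 le_rfl (by omega)
        rw [hγ1] at h; exact h
      · have h1 := ih (by omega) (by omega)
        have h2 := hmono j (by omega) (by omega)
        linarith
  have hγs : ∀ j, 2 ≤ j → j < s → 1 < (2:ℝ)^(γ j) := by
    intro j hj hjs
    have h := hγpos j hj (by omega)
    exact (Real.one_lt_rpow_iff_of_pos (by norm_num)).2 (Or.inl ⟨by norm_num, h⟩)
  refine ⟨∑ i ∈ Finset.range (t-s+1), |qcoef γ s (t-s) i|, ?_⟩
  intro L hL a hEq
  set d := fun i => qcoef γ s (t-s) i with hd
  set a' : Fin L → ℝ := fun k => ∑ i ∈ Finset.range (t-s+1),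
      (if (k:ℕ) + 1 ≤ s + i + (L - t) then d i else 0) with ha'
  have key : reVec L t γ L
      = ∑ i ∈ Finset.range (t-s+1), d i • reVec L s γ (s+i+(L-t)) := by
    have h := shift_id L s t γ hs hst (L - t)
    rw [show t + (L-t) = L by omega] at h
    exact h
  have tele : ∀ M, ∑ k ∈ Finset.range M, (reVec L s γ (k+1) - reVec L s γ k)
      = reVec L s γ M := by
    intro M
    rw [Finset.sum_range_sub (f := fun k => reVec L s γ k)]
    show _ - 0 = _
    rw [sub_zero]
  have hexist : ∑ k : Fin L, a' k • (reVec L s γ ((k:ℕ)+1) - reVec L s γ (k:ℕ))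
      = reVec L t γ L := by
    rw [key]
    rw [Fin.sum_univ_eq_sum_range (fun m => (∑ i ∈ Finset.range (t-s+1),
      (if m + 1 ≤ s + i + (L - t) then d i else 0)) •
        (reVec L s γ (m+1) - reVec L s γ m)) L]
    calc ∑ m ∈ Finset.range L, (∑ i ∈ Finset.range (t-s+1),
            (if m + 1 ≤ s + i + (L - t) then d i else 0)) •
            (reVec L s γ (m+1) - reVec L s γ m)
        = ∑ m ∈ Finset.range L, ∑ i ∈ Finset.range (t-s+1),
            (if m + 1 ≤ s + i + (L - t) then d i else 0) •
            (reVec L s γ (m+1) - reVec L s γ m) :=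
          Finset.sum_congr rfl fun m _ => Finset.sum_smul
      _ = ∑ i ∈ Finset.range (t-s+1), ∑ m ∈ Finset.range L,
            (if m + 1 ≤ s + i + (L - t) then d i else 0) •
            (reVec L s γ (m+1) - reVec L s γ m) := Finset.sum_comm
      _ = ∑ i ∈ Finset.range (t-s+1), d i • reVec L s γ (s+i+(L-t)) := by
          refine Finset.sum_congr rfl fun i hi => ?_
          rw [Finset.mem_range] at hi
          have hM : s+i+(L-t) ≤ L := by omega
          have h1 : ∑ m ∈ Finset.range L,
              (if m + 1 ≤ s + i + (L - t) then d i else 0) •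
              (reVec L s γ (m+1) - reVec L s γ m)
              = ∑ m ∈ Finset.range (s+i+(L-t)),
              (if m + 1 ≤ s + i + (L - t) then d i else 0) •
              (reVec L s γ (m+1) - reVec L s γ m) := by
            refine (Finset.sum_subset (Finset.range_subset_range.2 hM) ?_).symm
            intro m hmL hmM
            rw [Finset.mem_range] at hmL hmM
            rw [if_neg (by omega), zero_smul]
          rw [h1]
          calc ∑ m ∈ Finset.range (s+i+(L-t)),
                (if m + 1 ≤ s + i + (L - t) then d i else 0) •
                (reVec L s γ (m+1) - reVec L s γ m)
              = ∑ m ∈ Finset.range (s+i+(L-t)),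
                d i • (reVec L s γ (m+1) - reVec L s γ m) := by
                refine Finset.sum_congr rfl fun m hm => ?_
                rw [Finset.mem_range] at hm
                rw [if_pos (by omega)]
            _ = d i • ∑ m ∈ Finset.range (s+i+(L-t)),
                (reVec L s γ (m+1) - reVec L s γ m) := (Finset.smul_sum).symm
            _ = d i • reVec L s γ (s+i+(L-t)) := by rw [tele]
  have hzero : ∑ k : Fin L, (a k - a' k) •
      (reVec L s γ ((k:ℕ)+1) - reVec L s γ (k:ℕ)) = 0 := by
    simp only [sub_smul]
    rw [Finset.sum_sub_distrib, ← hEq, hexist, sub_self]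
  have huniq : ∀ k, a k = a' k := fun k => sub_eq_zero.1 (diff_indep L s γ hγs _ hzero k)
  constructor
  · intro k hk1 hk2 h1 h2
    rw [huniq, huniq]
    simp only [ha']
    refine Finset.sum_congr rfl fun i _ => ?_
    have c1 : ((⟨k-1, h1⟩ : Fin L) : ℕ) + 1 ≤ s + i + (L - t) := by
      show k - 1 + 1 ≤ s + i + (L - t); omega
    have c2 : ((⟨k, h2⟩ : Fin L) : ℕ) + 1 ≤ s + i + (L - t) := by
      show k + 1 ≤ s + i + (L - t); omega
    rw [if_pos c1, if_pos c2]
  · intro k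
    rw [huniq]
    calc |a' k| ≤ ∑ i ∈ Finset.range (t-s+1),
          |if (k:ℕ) + 1 ≤ s + i + (L - t) then d i else 0| :=
        Finset.abs_sum_le_sum_abs _ _
      _ ≤ ∑ i ∈ Finset.range (t-s+1), |qcoef γ s (t-s) i| := by
        refine Finset.sum_le_sum fun i _ => ?_
        split
        · exact le_rfl
        · simp [abs_nonneg]


/-- Lemma 3.7: writing `v^{L,t} = ∑_{k=1}^L a_k (v^{k,s} − v^{k−1,s})` in the basis of
Richardson extrapolation differences (with `s < t ≤ q`), the coefficients satisfy
`a_k = a_{k+1}` for `k = 1,…,L−t`, and are bounded by a constant independent of `k`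
and of `L`. -/
theorem stmt_10 (γ : ℕ → ℝ) (q s t : ℕ) (hs : 1 ≤ s) (hst : s < t) (htq : t ≤ q)
    (hγ1 : γ 1 = 0) (hmono : ∀ j, 1 ≤ j → j < q → γ j < γ (j + 1)) :
    ∃ c : ℝ, ∀ (L : ℕ) (hL : t ≤ L) (a : Fin L → ℝ),
      (reVec L t γ L
          = ∑ k : Fin L, a k • (reVec L s γ ((k : ℕ) + 1) - reVec L s γ (k : ℕ))) →
      (∀ (k : ℕ) (hk1 : 1 ≤ k) (hk : k ≤ L - t),
        a ⟨k - 1, by omega⟩ = a ⟨k, by omega⟩) ∧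
      (∀ k, |a k| ≤ c) := by
  rcases Nat.lt_or_ge s 2 with hs2 | hs2
  · have hs1 : s = 1 := by omega
    subst hs1
    have ht2 : 2 ≤ t := by omega
    obtain ⟨c, hc⟩ := master γ q 2 t le_rfl ht2 htq hγ1 hmono
    refine ⟨c, ?_⟩
    intro L hL a hEq
    have hEq2 : reVec L t γ L
        = ∑ k : Fin L, a k • (reVec L 2 γ ((k:ℕ)+1) - reVec L 2 γ (k:ℕ)) := by
      rw [hEq]
      refine Finset.sum_congr rfl fun k _ => ?_
      rw [reVec_one_two, reVec_one_two]
    obtain ⟨hA, hB⟩ := hc L hL a hEq2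
    exact ⟨fun k hk1 hk => hA k hk1 hk _ _, hB⟩
  · obtain ⟨c, hc⟩ := master γ q s t hs2 (le_of_lt hst) htq hγ1 hmono
    refine ⟨c, ?_⟩
    intro L hL a hEq
    obtain ⟨hA, hB⟩ := hc L hL a hEq
    exact ⟨fun k hk1 hk => hA k hk1 hk _ _, hB⟩
end
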